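/- arXiv:0905.2383 — 2 statements merged into one kernel-verified Lean document; each statement's English description precedes it below -/
import Mathlib

section
/- Let (φ, η) be an admissible pair with I = ℓ(φ) ∩ η. Let J ⊆ r(I) and K ⊆ I be subsets with ℓ(J) ∩ K = ∅, and also assume J ⊆ φ. Then the pair (φ \ J, η \ K) is admissible. -/
/-- For an admissible pair `(φ, η)` with `I = ℓ(φ) ∩ η`, and `J ⊆ r(I)`, `K ⊆ I`
with `ℓ(J) ∩ K = ∅` and `J ⊆ φ`, the pair `(φ \ J, η \ K)` is admissible. -/
theorem admissible_sub_pair (B : Type*) [Fintype B] (σ : Equiv.Perm B)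
    (φ η I J K : Set B) (hadm : σ ⁻¹' φᶜ ⊆ η) (hI : I = σ ⁻¹' φ ∩ η)
    (hJ : J ⊆ σ '' I) (hK : K ⊆ I) (hJK : σ ⁻¹' J ∩ K = ∅) (hJφ : J ⊆ φ) :
    σ ⁻¹' (φ \ J)ᶜ ⊆ η \ K := by
  intro x hx
  simp only [Set.mem_preimage, Set.mem_compl_iff, Set.mem_diff, not_and, not_not] at hx
  by_cases hφ : σ x ∈ φ
  · have hxJ : σ x ∈ J := hx hφ
    constructor
    · obtain ⟨y, hyI, hy⟩ := hJ hxJ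
      have : y = x := σ.injective hy
      subst this
      exact (hI ▸ hyI).2
    · intro hxK
      exact Set.eq_empty_iff_forall_notMem.mp hJK x ⟨hxJ, hxK⟩
  · refine ⟨hadm hφ, fun hxK => hφ ?_⟩
    exact (hI ▸ hK hxK).1
end

section
/- Let k be a field, I a finite index set, β₀, β₁ ∈ I two distinct elements, and R = k[x_γ, y_γ : γ ∈ I] a polynomial ring. For J ⊆ I let 𝔍_J be the ideal of R generated by {x_γ : γ ∉ J} ∪ {y_γ : γ ∈ J}. Then the intersection of the ideals 𝔍_J over all J ⊆ I with β₀ ∉ J and β₁ ∈ J equals the ideal generated by x_{β₀}, y_{β₁}, and all products x_γ·y_γ for γ ∈ I. -/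
open MvPolynomial

/-- In `R = k[x_γ, y_γ : γ ∈ I]` (with `x_γ = X (inl γ)`, `y_γ = X (inr γ)`), the
intersection of the ideals `𝔍_J = ⟨{x_γ : γ ∉ J} ∪ {y_γ : γ ∈ J}⟩` over all
`J ⊆ I` with `β₀ ∉ J` and `β₁ ∈ J` equals `⟨x_{β₀}, y_{β₁}, {x_γ y_γ : γ ∈ I}⟩`. -/
theorem inf_ideals_J (k : Type*) [Field k] (I : Type*) [Fintype I] [DecidableEq I]
    (β₀ β₁ : I) (hβ : β₀ ≠ β₁) :
    (⨅ J ∈ {J : Set I | β₀ ∉ J ∧ β₁ ∈ J},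
        Ideal.span ((fun γ => (X (Sum.inl γ) : MvPolynomial (I ⊕ I) k)) '' Jᶜ ∪
          (fun γ => (X (Sum.inr γ) : MvPolynomial (I ⊕ I) k)) '' J)) =
      Ideal.span ({(X (Sum.inl β₀) : MvPolynomial (I ⊕ I) k), X (Sum.inr β₁)} ∪
        Set.range fun γ : I =>
          (X (Sum.inl γ) : MvPolynomial (I ⊕ I) k) * X (Sum.inr γ)) := by
  have hL : ∀ J : Set I,
      ((fun γ => (X (Sum.inl γ) : MvPolynomial (I ⊕ I) k)) '' Jᶜ ∪
        (fun γ => (X (Sum.inr γ) : MvPolynomial (I ⊕ I) k)) '' J)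
      = X '' (Sum.inl '' Jᶜ ∪ Sum.inr '' J) := by
    intro J
    rw [Set.image_union, Set.image_image, Set.image_image]
  have hR : ({(X (Sum.inl β₀) : MvPolynomial (I ⊕ I) k), X (Sum.inr β₁)} ∪
        Set.range fun γ : I =>
          (X (Sum.inl γ) : MvPolynomial (I ⊕ I) k) * X (Sum.inr γ))
      = (fun s => monomial s (1 : k)) ''
        ({Finsupp.single (Sum.inl β₀) 1, Finsupp.single (Sum.inr β₁) 1} ∪
          Set.range fun γ : I => Finsupp.single (Sum.inl (γ : I) : I ⊕ I) 1 +
            Finsupp.single (Sum.inr γ) 1) := by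
    rw [Set.image_union, Set.image_insert_eq, Set.image_singleton]
    congr 1
    ext p
    simp only [Set.mem_image, Set.mem_range]
    constructor
    · rintro ⟨γ, rfl⟩
      exact ⟨_, ⟨γ, rfl⟩, by simp [X, monomial_mul]⟩
    · rintro ⟨s, ⟨γ, rfl⟩, rfl⟩
      exact ⟨γ, by simp [X, monomial_mul]⟩
  ext f
  simp only [Ideal.mem_iInf, Set.mem_setOf_eq, hL, hR, mem_ideal_span_X_image,
    mem_ideal_span_monomial_image]
  constructor
  · intro h m hm
    by_cases h0 : m (Sum.inl β₀) ≠ 0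
    · exact ⟨_, Or.inl (Or.inl rfl), by simpa [Finsupp.single_le_iff, Nat.one_le_iff_ne_zero]⟩
    by_cases h1 : m (Sum.inr β₁) ≠ 0
    · exact ⟨_, Or.inl (Or.inr rfl), by simpa [Finsupp.single_le_iff, Nat.one_le_iff_ne_zero]⟩
    push_neg at h0 h1
    by_cases h2 : ∃ γ, m (Sum.inl γ) ≠ 0 ∧ m (Sum.inr γ) ≠ 0
    · obtain ⟨γ, hx, hy⟩ := h2
      refine ⟨_, Or.inr ⟨γ, rfl⟩, ?_⟩
      rw [Finsupp.le_iff]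
      intro i _
      rcases i with a | a <;>
        simp_all [Finsupp.single_apply, Nat.one_le_iff_ne_zero, Sum.inl.injEq, Sum.inr.injEq]
    push_neg at h2
    -- contradiction with J = {γ | m (inl γ) ≠ 0} ∪ {β₁}
    exfalso
    set J : Set I := {γ | m (Sum.inl γ) ≠ 0} ∪ {β₁} with hJ
    have hβ₀ : β₀ ∉ J := by
      simp [hJ, h0, hβ]
    have hβ₁ : β₁ ∈ J := Or.inr rfl
    obtain ⟨i, hi, hne⟩ := h J ⟨hβ₀, hβ₁⟩ m hm
    rcases hi with ⟨γ, hγ, rfl⟩ | ⟨γ, hγ, rfl⟩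
    · exact hγ (Or.inl hne)
    · rcases hγ with hγ | hγ
      · exact hne (h2 γ hγ)
      · rw [Set.mem_singleton_iff] at hγ
        exact hne (hγ ▸ h1)
  · intro h J hJcond m hm
    obtain ⟨s, hs, hsm⟩ := h m hm
    rcases hs with (rfl | rfl) | ⟨γ, rfl⟩
    · refine ⟨Sum.inl β₀, Or.inl ⟨β₀, hJcond.1, rfl⟩, ?_⟩
      have := hsm (Sum.inl β₀)
      simpa [Nat.one_le_iff_ne_zero] using this
    · refine ⟨Sum.inr β₁, Or.inr ⟨β₁, hJcond.2, rfl⟩, ?_⟩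
      have := hsm (Sum.inr β₁)
      simpa [Nat.one_le_iff_ne_zero] using this
    · have hx : m (Sum.inl γ) ≠ 0 := by
        have := hsm (Sum.inl γ); simp [Nat.one_le_iff_ne_zero] at this; omega
      have hy : m (Sum.inr γ) ≠ 0 := by
        have := hsm (Sum.inr γ); simp [Nat.one_le_iff_ne_zero] at this; omega
      by_cases hγJ : γ ∈ J
      · exact ⟨Sum.inr γ, Or.inr ⟨γ, hγJ, rfl⟩, hy⟩
      · exact ⟨Sum.inl γ, Or.inl ⟨γ, hγJ, rfl⟩, hx⟩
end
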